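/- Let (Ω, F, μ) be a probability space and let U, W, ε_M, ε_T, ε_Y be square-integrable real random variables, each with mean 0 and variance 1, with all pairwise covariances among {U, W, ε_M, ε_T, ε_Y} equal to 0. Let a, b, c, d, e, f be real numbers with b² + c² ≤ 1, a² + e² + 2abe ≤ 1, and d² + f² + 2cdf ≤ 1 (so that M, T, Y below each have variance 1). Define M := b·U + c·W + √(1−b²−c²)·ε_M, T := a·U + e·M + √(1−a²−e²−2abe)·ε_T, and Y := d·W + f·M + √(1−d²−f²−2cdf)·ε_Y. Then Cov(T, Y) = abf + cde + ef. -/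

import Mathlib

open MeasureTheory ProbabilityTheory

/-- Covariance of two real random variables: `Cov(X,Y) = E[XY] - E[X] E[Y]`. -/
noncomputable def covar {Ω : Type*} [MeasurableSpace Ω] (μ : Measure Ω) (X Y : Ω → ℝ) : ℝ :=
  (∫ ω, X ω * Y ω ∂μ) - (∫ ω, X ω ∂μ) * (∫ ω, Y ω ∂μ)

/-- The population OLS coefficient on `T` when regressing `Y` on `(T, M)`. -/
noncomputable def betaT {Ω : Type*} [MeasurableSpace Ω] (μ : Measure Ω) (Y T M : Ω → ℝ) : ℝ :=
  (covar μ Y T * variance M μ - covar μ Y M * covar μ M T) /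
    (variance T μ * variance M μ - (covar μ M T) ^ 2)

section Aux

variable {Ω : Type*} [MeasurableSpace Ω] {μ : Measure Ω}

lemma memL2_mul_integrable {X Y : Ω → ℝ} (hX : MemLp X 2 μ) (hY : MemLp Y 2 μ) :
    Integrable (fun ω => X ω * Y ω) μ := by
  have h1 := (hX.add hY).integrable_sq
  have h2 := hX.integrable_sq
  have h3 := hY.integrable_sq
  have heq : (fun ω => X ω * Y ω)
      = fun ω => ((X ω + Y ω) ^ 2 - X ω ^ 2 - Y ω ^ 2) * (1 / 2) := by
    funext ω; ring
  rw [heq]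
  exact ((h1.sub h2).sub h3).mul_const _

lemma covar_comm (μ : Measure Ω) (X Y : Ω → ℝ) : covar μ X Y = covar μ Y X := by
  unfold covar
  rw [mul_comm (∫ ω, X ω ∂μ)]
  congr 1
  exact integral_congr_ae (Filter.Eventually.of_forall fun ω => mul_comm _ _)

lemma covar_smul_left (μ : Measure Ω) (c : ℝ) (X Y : Ω → ℝ) :
    covar μ (fun ω => c * X ω) Y = c * covar μ X Y := by
  unfold covar
  simp only [mul_assoc, integral_const_mul]
  ring

lemma covar_add_left [IsFiniteMeasure μ] (X X' Y : Ω → ℝ)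
    (hX : MemLp X 2 μ) (hX' : MemLp X' 2 μ) (hY : MemLp Y 2 μ) :
    covar μ (fun ω => X ω + X' ω) Y = covar μ X Y + covar μ X' Y := by
  unfold covar
  simp only [add_mul]
  rw [integral_add (memL2_mul_integrable hX hY) (memL2_mul_integrable hX' hY),
    integral_add (hX.integrable one_le_two) (hX'.integrable one_le_two)]
  ring

lemma covar_self [IsProbabilityMeasure μ] (X : Ω → ℝ) (hX : MemLp X 2 μ) :
    covar μ X X = variance X μ := by
  rw [variance_eq_sub hX]
  simp [covar, sq]

lemma covar4_left [IsFiniteMeasure μ] (p1 p2 p3 p4 : ℝ) (X1 X2 X3 X4 Y : Ω → ℝ)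
    (h1 : MemLp X1 2 μ) (h2 : MemLp X2 2 μ) (h3 : MemLp X3 2 μ) (h4 : MemLp X4 2 μ)
    (hY : MemLp Y 2 μ) :
    covar μ (fun ω => p1 * X1 ω + p2 * X2 ω + p3 * X3 ω + p4 * X4 ω) Y =
      p1 * covar μ X1 Y + p2 * covar μ X2 Y + p3 * covar μ X3 Y + p4 * covar μ X4 Y := by
  have m1 : MemLp (fun ω => p1 * X1 ω) 2 μ := h1.const_mul p1
  have m2 : MemLp (fun ω => p2 * X2 ω) 2 μ := h2.const_mul p2
  have m3 : MemLp (fun ω => p3 * X3 ω) 2 μ := h3.const_mul p3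
  have m4 : MemLp (fun ω => p4 * X4 ω) 2 μ := h4.const_mul p4
  rw [covar_add_left (fun ω => p1 * X1 ω + p2 * X2 ω + p3 * X3 ω) (fun ω => p4 * X4 ω) Y
      ((m1.add m2).add m3) m4 hY,
    covar_add_left (fun ω => p1 * X1 ω + p2 * X2 ω) (fun ω => p3 * X3 ω) Y (m1.add m2) m3 hY,
    covar_add_left (fun ω => p1 * X1 ω) (fun ω => p2 * X2 ω) Y m1 m2 hY,
    covar_smul_left, covar_smul_left, covar_smul_left, covar_smul_left]

end Aux

/-- Bias of the unadjusted estimator in the Butterfly-structure: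
`Cov(T, Y) = abf + cde + ef`. -/
theorem stmt7 {Ω : Type*} [MeasurableSpace Ω] (μ : Measure Ω) [IsProbabilityMeasure μ]
    (U W εM εT εY : Ω → ℝ)
    (hU2 : MemLp U 2 μ) (hW2 : MemLp W 2 μ) (hεM2 : MemLp εM 2 μ)
    (hεT2 : MemLp εT 2 μ) (hεY2 : MemLp εY 2 μ)
    (hUm : ∫ ω, U ω ∂μ = 0) (hWm : ∫ ω, W ω ∂μ = 0) (hεMm : ∫ ω, εM ω ∂μ = 0)
    (hεTm : ∫ ω, εT ω ∂μ = 0) (hεYm : ∫ ω, εY ω ∂μ = 0)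
    (hUv : variance U μ = 1) (hWv : variance W μ = 1) (hεMv : variance εM μ = 1)
    (hεTv : variance εT μ = 1) (hεYv : variance εY μ = 1)
    (hUW : covar μ U W = 0)
    (hUεM : covar μ U εM = 0) (hUεT : covar μ U εT = 0) (hUεY : covar μ U εY = 0)
    (hWεM : covar μ W εM = 0) (hWεT : covar μ W εT = 0) (hWεY : covar μ W εY = 0)
    (hεMεT : covar μ εM εT = 0) (hεMεY : covar μ εM εY = 0) (hεTεY : covar μ εT εY = 0)
    (a b c d e f : ℝ)
    (hbc : b ^ 2 + c ^ 2 ≤ 1)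
    (hae : a ^ 2 + e ^ 2 + 2 * a * b * e ≤ 1)
    (hdf : d ^ 2 + f ^ 2 + 2 * c * d * f ≤ 1)
    (M T Y : Ω → ℝ)
    (hM : M = fun ω => b * U ω + c * W ω + Real.sqrt (1 - b ^ 2 - c ^ 2) * εM ω)
    (hT : T = fun ω => a * U ω + e * M ω +
      Real.sqrt (1 - a ^ 2 - e ^ 2 - 2 * a * b * e) * εT ω)
    (hY : Y = fun ω => d * W ω + f * M ω +
      Real.sqrt (1 - d ^ 2 - f ^ 2 - 2 * c * d * f) * εY ω) :
    covar μ T Y = a * b * f + c * d * e + e * f := by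
  have hs0 : (0 : ℝ) ≤ 1 - b ^ 2 - c ^ 2 := by linarith
  set s := Real.sqrt (1 - b ^ 2 - c ^ 2) with hsdef
  set t := Real.sqrt (1 - a ^ 2 - e ^ 2 - 2 * a * b * e) with htdef
  set u := Real.sqrt (1 - d ^ 2 - f ^ 2 - 2 * c * d * f) with hudef
  have hs2 : s ^ 2 = 1 - b ^ 2 - c ^ 2 := Real.sq_sqrt hs0
  subst hM
  have hT' : T = fun ω => (a + e * b) * U ω + (e * c) * W ω + (e * s) * εM ω + t * εT ω := by
    rw [hT]; funext ω; ring
  have hY' : Y = fun ω => (f * b) * U ω + (d + f * c) * W ω + (f * s) * εM ω + u * εY ω := by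
    rw [hY]; funext ω; ring
  have hG : MemLp (fun ω => (f * b) * U ω + (d + f * c) * W ω + (f * s) * εM ω + u * εY ω) 2 μ :=
    (((hU2.const_mul _).add (hW2.const_mul _)).add (hεM2.const_mul _)).add (hεY2.const_mul _)
  rw [hT', hY',
    covar4_left (a + e * b) (e * c) (e * s) t U W εM εT _ hU2 hW2 hεM2 hεT2 hG,
    covar_comm μ U, covar_comm μ W, covar_comm μ εM, covar_comm μ εT,
    covar4_left (f * b) (d + f * c) (f * s) u U W εM εY U hU2 hW2 hεM2 hεY2 hU2,
    covar4_left (f * b) (d + f * c) (f * s) u U W εM εY W hU2 hW2 hεM2 hεY2 hW2,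
    covar4_left (f * b) (d + f * c) (f * s) u U W εM εY εM hU2 hW2 hεM2 hεY2 hεM2,
    covar4_left (f * b) (d + f * c) (f * s) u U W εM εY εT hU2 hW2 hεM2 hεY2 hεT2,
    covar_self U hU2, covar_self W hW2, covar_self εM hεM2,
    covar_comm μ W U, covar_comm μ εM U, covar_comm μ εY U,
    covar_comm μ εM W, covar_comm μ εY W, covar_comm μ εY εM, covar_comm μ εY εT,
    hUv, hWv, hεMv, hUW, hUεM, hUεY, hWεM, hWεY, hεMεY, hUεT, hWεT, hεMεT, hεTεY]
  linear_combination e * f * hs2
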